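/- Vector-norm error bound for the regularised truncated gauge potential acting on an eigenstate: let H be hermitian with orthonormal eigenbasis {|m⟩} and eigenvalues {E_m}, let B be hermitian, and fix an index n such that |E_m − E_n| ≥ Δ > 0 for all m ≠ n. Define A|coefficients by ⟨m|A|n⟩ = ⟨m|B|n⟩/(i(E_m − E_n)) for m ≠ n and ⟨n|A|n⟩ = 0, and define A_{η,a} = (1/2)∫_{−a}^{a} e^{−η|τ|} sgn(τ) e^{−iHτ} B e^{iHτ} dτ. Then ‖(A − A_{η,a})|n⟩‖ ≤ ‖B‖ · (η²/Δ³ + e^{−ηa}(1/Δ + 1/η)). -/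

import Mathlib

open scoped InnerProductSpace

lemma exp_apply_eigen {d : ℕ} (T : EuclideanSpace ℂ (Fin d) →L[ℂ] EuclideanSpace ℂ (Fin d))
    (v : EuclideanSpace ℂ (Fin d)) (μ : ℂ) (h : T v = μ • v) :
    NormedSpace.exp T v = Complex.exp μ • v := by
  have hpow : ∀ j : ℕ, (T ^ j) v = μ ^ j • v := by
    intro j; induction j with
    | zero => simp
    | succ j ih =>
      rw [pow_succ, ContinuousLinearMap.mul_apply, h, map_smul, ih, smul_smul, ← pow_succ']
  have hs := NormedSpace.expSeries_summable' (𝕂 := ℂ) T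
  have hsμ : Summable fun j : ℕ => ((j.factorial : ℂ))⁻¹ * μ ^ j := by
    simpa [smul_eq_mul] using NormedSpace.expSeries_summable' (𝕂 := ℂ) μ
  have key := (ContinuousLinearMap.apply ℂ (EuclideanSpace ℂ (Fin d)) v).map_tsum hs
  calc NormedSpace.exp T v
      = (∑' j : ℕ, ((j.factorial : ℂ))⁻¹ • T ^ j) v := by rw [NormedSpace.exp_eq_tsum ℂ]
    _ = ∑' j : ℕ, (((j.factorial : ℂ))⁻¹ * μ ^ j) • v := by
        have : ((ContinuousLinearMap.apply ℂ (EuclideanSpace ℂ (Fin d)) v))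
            (∑' j : ℕ, ((j.factorial : ℂ))⁻¹ • T ^ j)
            = ∑' j : ℕ, ((ContinuousLinearMap.apply ℂ (EuclideanSpace ℂ (Fin d)) v))
              (((j.factorial : ℂ))⁻¹ • T ^ j) := key
        simpa [ContinuousLinearMap.apply_apply, hpow, smul_smul] using this
    _ = (∑' j : ℕ, ((j.factorial : ℂ))⁻¹ * μ ^ j) • v := Summable.tsum_smul_const hsμ v
    _ = Complex.exp μ • v := by
        rw [Complex.exp_eq_exp_ℂ, NormedSpace.exp_eq_tsum ℂ]
        simp [smul_eq_mul]

lemma mel {d : ℕ}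
    (H B : EuclideanSpace ℂ (Fin d) →L[ℂ] EuclideanSpace ℂ (Fin d))
    (hH : IsSelfAdjoint H)
    (e : OrthonormalBasis (Fin d) ℂ (EuclideanSpace ℂ (Fin d)))
    (Ev : Fin d → ℝ) (heig : ∀ k, H (e k) = (Ev k : ℂ) • e k)
    (m n : Fin d) (τ : ℝ) :
    ⟪e m, (NormedSpace.exp ((-(τ : ℂ) * Complex.I) • H) * B *
        NormedSpace.exp (((τ : ℂ) * Complex.I) • H)) (e n)⟫_ℂ
      = Complex.exp ((-((Ev m - Ev n : ℝ) : ℂ) * Complex.I) * (τ : ℂ))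
          * ⟪e m, B (e n)⟫_ℂ := by
  have heig' : ∀ (c : ℂ) (k : Fin d), (c • H) (e k) = (c * Ev k) • e k := by
    intro c k
    rw [ContinuousLinearMap.smul_apply, heig, smul_smul]
  have h1 : NormedSpace.exp (((τ : ℂ) * Complex.I) • H) (e n)
      = Complex.exp ((τ : ℂ) * Complex.I * Ev n) • e n :=
    exp_apply_eigen _ _ _ (heig' _ n)
  have hadj : ContinuousLinearMap.adjoint (NormedSpace.exp ((-(τ : ℂ) * Complex.I) • H))
      = NormedSpace.exp (((τ : ℂ) * Complex.I) • H) := by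
    rw [← ContinuousLinearMap.star_eq_adjoint, NormedSpace.star_exp]
    congr 1
    rw [star_smul, hH.star_eq]
    congr 1
    simp [Complex.star_def, map_mul, map_neg, Complex.conj_I, Complex.conj_ofReal]
  rw [ContinuousLinearMap.mul_apply, ContinuousLinearMap.mul_apply, h1, map_smul, map_smul,
    inner_smul_right,
    ← ContinuousLinearMap.adjoint_inner_left (NormedSpace.exp ((-(τ : ℂ) * Complex.I) • H)),
    hadj, exp_apply_eigen _ _ _ (heig' _ m), inner_smul_left, ← Complex.exp_conj]
  rw [← mul_assoc, ← Complex.exp_add]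
  congr 2
  simp [Complex.conj_ofReal, Complex.conj_I]
  ring

lemma sign_measurable' : Measurable Real.sign := by
  have : Real.sign = fun x : ℝ => if x < 0 then (-1:ℝ) else if 0 < x then 1 else 0 := by
    funext x; rw [Real.sign]
  rw [this]
  exact Measurable.ite measurableSet_Iio measurable_const
    (Measurable.ite measurableSet_Ioi measurable_const measurable_const)

lemma sgn_exp_bound (η : ℝ) (hη : 0 < η) (τ : ℝ) :
    ‖((Real.exp (-η * |τ|) * Real.sign τ : ℝ) : ℂ)‖ ≤ 1 := by
  rw [Complex.norm_real, Real.norm_eq_abs, abs_mul]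
  have h1 : Real.exp (-η * |τ|) ≤ 1 := by
    rw [Real.exp_le_one_iff]
    have := abs_nonneg τ
    nlinarith
  have h2 : |Real.sign τ| ≤ 1 := by
    rcases lt_trichotomy τ 0 with h | h | h
    · rw [Real.sign_of_neg h]; norm_num
    · rw [h, Real.sign_zero]; norm_num
    · rw [Real.sign_of_pos h]; norm_num
  calc |Real.exp (-η * |τ|)| * |Real.sign τ| ≤ 1 * 1 := by
        apply mul_le_mul _ h2 (abs_nonneg _) zero_le_one
        rwa [abs_of_pos (Real.exp_pos _)]
    _ = 1 := by norm_num

lemma phi_measurable (η ω : ℝ) :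
    Measurable (fun τ : ℝ => ((Real.exp (-η * |τ|) * Real.sign τ : ℝ) : ℂ) *
      Complex.exp ((-(ω : ℂ) * Complex.I) * (τ : ℂ))) := by
  apply Measurable.mul
  · exact Complex.measurable_ofReal.comp
      ((Real.continuous_exp.measurable.comp (by fun_prop)).mul sign_measurable')
  · exact (Complex.continuous_exp.comp (by continuity)).measurable

lemma phi_bound (η ω : ℝ) (hη : 0 < η) (τ : ℝ) :
    ‖((Real.exp (-η * |τ|) * Real.sign τ : ℝ) : ℂ) *
      Complex.exp ((-(ω : ℂ) * Complex.I) * (τ : ℂ))‖ ≤ 1 := by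
  have hre : ((-(ω : ℂ) * Complex.I) * (τ : ℂ)).re = 0 := by simp
  rw [norm_mul, Complex.norm_exp, hre,
    Real.exp_zero, mul_one]
  exact sgn_exp_bound η hη τ

lemma phi_intervalIntegrable (η ω : ℝ) (hη : 0 < η) (x y : ℝ) :
    IntervalIntegrable (fun τ : ℝ => ((Real.exp (-η * |τ|) * Real.sign τ : ℝ) : ℂ) *
      Complex.exp ((-(ω : ℂ) * Complex.I) * (τ : ℂ))) MeasureTheory.volume x y := by
  rw [intervalIntegrable_iff]
  apply MeasureTheory.Measure.integrableOn_of_bounded (M := 1)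
  · exact (measure_Ioc_lt_top).ne
  · exact (phi_measurable η ω).aestronglyMeasurable
  · exact Filter.Eventually.of_forall (fun τ => phi_bound η ω hη τ)

lemma Kval_eq (η a ω : ℝ) (hη : 0 < η) (ha : 0 < a) :
    (∫ τ in (-a)..a, ((Real.exp (-η * |τ|) * Real.sign τ : ℝ) : ℂ) *
        Complex.exp ((-(ω : ℂ) * Complex.I) * (τ : ℂ)))
      = (Complex.exp (-((η : ℂ) - ω * Complex.I) * a) - 1) / ((η : ℂ) - ω * Complex.I)
        + (1 - Complex.exp (-((η : ℂ) + ω * Complex.I) * a)) / ((η : ℂ) + ω * Complex.I) := by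
  have hq : ((η : ℂ) - ω * Complex.I) ≠ 0 := by
    intro h
    have := congrArg Complex.re h
    simp at this
    linarith
  have hp : ((η : ℂ) + ω * Complex.I) ≠ 0 := by
    intro h
    have := congrArg Complex.re h
    simp at this
    linarith
  have hc2 : (-(η : ℂ) - ω * Complex.I) ≠ 0 := by
    intro h
    have := congrArg Complex.re h
    simp at this
    linarith
  have h0 : ∀ᵐ x : ℝ, x ≠ 0 := by
    rw [MeasureTheory.ae_iff]
    simpa using Real.volume_singleton
  have hsplit := intervalIntegral.integral_add_adjacent_intervals
    (phi_intervalIntegrable η ω hη (-a) 0) (phi_intervalIntegrable η ω hη 0 a)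
  rw [← hsplit]
  have hpos : (∫ τ in (0:ℝ)..a, ((Real.exp (-η * |τ|) * Real.sign τ : ℝ) : ℂ) *
        Complex.exp ((-(ω : ℂ) * Complex.I) * (τ : ℂ)))
      = ∫ τ in (0:ℝ)..a, Complex.exp ((-(η : ℂ) - ω * Complex.I) * τ) := by
    apply intervalIntegral.integral_congr_ae
    filter_upwards with x hx
    rw [Set.uIoc_of_le ha.le] at hx
    have hx0 : 0 < x := hx.1
    rw [abs_of_pos hx0, Real.sign_of_pos hx0, mul_one, Complex.ofReal_exp, ← Complex.exp_add]
    congr 1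
    push_cast
    ring
  have hneg : (∫ τ in (-a)..(0:ℝ), ((Real.exp (-η * |τ|) * Real.sign τ : ℝ) : ℂ) *
        Complex.exp ((-(ω : ℂ) * Complex.I) * (τ : ℂ)))
      = ∫ τ in (-a)..(0:ℝ), -Complex.exp (((η : ℂ) - ω * Complex.I) * τ) := by
    apply intervalIntegral.integral_congr_ae
    filter_upwards [h0] with x hx0 hx
    rw [Set.uIoc_of_le (by linarith : -a ≤ 0)] at hx
    have hxneg : x < 0 := lt_of_le_of_ne hx.2 hx0
    rw [abs_of_neg hxneg, Real.sign_of_neg hxneg, Complex.ofReal_mul, Complex.ofReal_exp]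
    have harg : ((-η * -x : ℝ) : ℂ) = (η : ℂ) * x := by push_cast; ring
    rw [harg, Complex.ofReal_neg, Complex.ofReal_one, mul_neg_one, neg_mul,
      ← Complex.exp_add]
    congr 2
    ring
  rw [hpos, hneg, intervalIntegral.integral_neg,
    integral_exp_mul_complex hq, integral_exp_mul_complex hc2]
  push_cast
  rw [mul_zero, mul_zero, Complex.exp_zero]
  field_simp
  ring_nf

lemma Kbound (η a Δ ω : ℝ) (hη : 0 < η) (ha : 0 < a) (hΔ : 0 < Δ) (hω : Δ ≤ |ω|) :
    ‖(Complex.I * (ω : ℂ))⁻¹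
        - (1 / 2 : ℂ) * ((Complex.exp (-((η : ℂ) - ω * Complex.I) * a) - 1) / ((η : ℂ) - ω * Complex.I)
          + (1 - Complex.exp (-((η : ℂ) + ω * Complex.I) * a)) / ((η : ℂ) + ω * Complex.I))‖
      ≤ η ^ 2 / Δ ^ 3 + Real.exp (-η * a) * (1 / Δ + 1 / η) := by
  set q : ℂ := (η : ℂ) - ω * Complex.I with hq_def
  set p : ℂ := (η : ℂ) + ω * Complex.I with hp_def
  have hω0 : ω ≠ 0 := by intro h; rw [h] at hω; simp at hω; linarith
  have hωc : (ω : ℂ) ≠ 0 := Complex.ofReal_ne_zero.mpr hω0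
  have hq : q ≠ 0 := by
    intro h; have := congrArg Complex.re h; simp [hq_def] at this; linarith
  have hp : p ≠ 0 := by
    intro h; have := congrArg Complex.re h; simp [hp_def] at this; linarith
  have hs : ((η : ℂ) ^ 2 + (ω : ℂ) ^ 2) ≠ 0 := by
    have : ((η : ℂ) ^ 2 + (ω : ℂ) ^ 2) = ((η ^ 2 + ω ^ 2 : ℝ) : ℂ) := by push_cast; ring
    rw [this]
    exact Complex.ofReal_ne_zero.mpr (by positivity)
  have hpq : q * p = (η : ℂ) ^ 2 + (ω : ℂ) ^ 2 := by
    simp only [hq_def, hp_def]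
    linear_combination (-(ω:ℂ)^2) * Complex.I_sq
  have hdecomp : (Complex.I * (ω : ℂ))⁻¹
          - (1 / 2 : ℂ) * ((Complex.exp (-q * a) - 1) / q + (1 - Complex.exp (-p * a)) / p)
      = ((Complex.I * (ω : ℂ))⁻¹ + 1 / 2 * (1 / q) - 1 / 2 * (1 / p))
        - 1 / 2 * (Complex.exp (-q * a) / q) + 1 / 2 * (Complex.exp (-p * a) / p) := by
    ring
  have hT1 : (Complex.I * (ω : ℂ))⁻¹ + 1 / 2 * (1 / q) - 1 / 2 * (1 / p)
      = -Complex.I * (η : ℂ) ^ 2 / ((ω : ℂ) * ((η : ℂ) ^ 2 + (ω : ℂ) ^ 2)) := by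
    have e1 : (1 : ℂ) / 2 * (1 / q) = 1 / (2 * q) := by
      rw [div_mul_div_comm, one_mul]
    have e2 : (1 : ℂ) / 2 * (1 / p) = 1 / (2 * p) := by
      rw [div_mul_div_comm, one_mul]
    have h1 : (1 : ℂ) / (2 * q) - 1 / (2 * p) = (2 * p - 2 * q) / ((2 * q) * (2 * p)) := by
      rw [div_sub_div _ _ (by simpa using hq) (by simpa using hp), one_mul, mul_one]
    have h3 : 2 * p - 2 * q = 4 * ((ω : ℂ) * Complex.I) := by
      simp only [hq_def, hp_def]; ring
    have h2 : (2 * q) * (2 * p) = 4 * ((η : ℂ) ^ 2 + (ω : ℂ) ^ 2) := by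
      linear_combination 4 * hpq
    rw [e1, e2, add_sub_assoc, h1, h3, h2, mul_inv, Complex.inv_I]
    field_simp
    ring
  rw [hdecomp, hT1]
  have habs1 : ‖-Complex.I * (η : ℂ) ^ 2 / ((ω : ℂ) * ((η : ℂ) ^ 2 + (ω : ℂ) ^ 2))‖
      ≤ η ^ 2 / Δ ^ 3 := by
    have hcast : -Complex.I * (η : ℂ) ^ 2 / ((ω : ℂ) * ((η : ℂ) ^ 2 + (ω : ℂ) ^ 2))
        = -Complex.I * ((η ^ 2 : ℝ) : ℂ) / (((ω * (η ^ 2 + ω ^ 2)) : ℝ) : ℂ) := by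
      push_cast; ring
    rw [hcast, norm_div, norm_mul, norm_neg, Complex.norm_I, one_mul,
      Complex.norm_real, Complex.norm_real, Real.norm_eq_abs, Real.norm_eq_abs,
      abs_of_pos (by positivity : (0:ℝ) < η ^ 2)]
    have hden : Δ ^ 3 ≤ |ω * (η ^ 2 + ω ^ 2)| := by
      rw [abs_mul, abs_of_pos (by positivity : (0:ℝ) < η ^ 2 + ω ^ 2)]
      have h1 : Δ ^ 3 ≤ |ω| ^ 3 := pow_le_pow_left₀ hΔ.le hω 3
      have h2 : |ω| ^ 3 = |ω| * ω ^ 2 := by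
        rw [pow_succ' (|ω|) 2, sq_abs]
      nlinarith [abs_nonneg ω, sq_nonneg η]
    exact div_le_div_of_nonneg_left (by positivity) (by positivity) hden
  have hnq : η ≤ ‖q‖ := by
    have h1 : q.re = η := by simp [hq_def]
    calc η = |q.re| := by rw [h1, abs_of_pos hη]
      _ ≤ ‖q‖ := Complex.abs_re_le_norm q
      _ = ‖q‖ := rfl
  have hnp : η ≤ ‖p‖ := by
    have h1 : p.re = η := by simp [hp_def]
    calc η = |p.re| := by rw [h1, abs_of_pos hη]
      _ ≤ ‖p‖ := Complex.abs_re_le_norm p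
      _ = ‖p‖ := rfl
  have hqnorm0 : (0:ℝ) < ‖q‖ := lt_of_lt_of_le hη hnq
  have hpnorm0 : (0:ℝ) < ‖p‖ := lt_of_lt_of_le hη hnp
  have habs2 : ‖(1 / 2 : ℂ) * (Complex.exp (-q * a) / q)‖ ≤ Real.exp (-η * a) / (2 * η) := by
    have hhalf : ‖(1 / 2 : ℂ)‖ = 1 / 2 := by norm_num
    rw [norm_mul, hhalf, norm_div, Complex.norm_exp]
    have hre : (-q * a).re = -η * a := by simp [hq_def]
    rw [hre]
    have hmono : Real.exp (-η * a) / ‖q‖ ≤ Real.exp (-η * a) / η :=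
      div_le_div_of_nonneg_left (Real.exp_nonneg _) hη hnq
    calc 1 / 2 * (Real.exp (-η * a) / ‖q‖) ≤ 1 / 2 * (Real.exp (-η * a) / η) := by linarith
      _ = Real.exp (-η * a) / (2 * η) := by ring
  have habs3 : ‖(1 / 2 : ℂ) * (Complex.exp (-p * a) / p)‖ ≤ Real.exp (-η * a) / (2 * η) := by
    have hhalf : ‖(1 / 2 : ℂ)‖ = 1 / 2 := by norm_num
    rw [norm_mul, hhalf, norm_div, Complex.norm_exp]
    have hre : (-p * a).re = -η * a := by simp [hp_def]
    rw [hre]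
    have hmono : Real.exp (-η * a) / ‖p‖ ≤ Real.exp (-η * a) / η :=
      div_le_div_of_nonneg_left (Real.exp_nonneg _) hη hnp
    calc 1 / 2 * (Real.exp (-η * a) / ‖p‖) ≤ 1 / 2 * (Real.exp (-η * a) / η) := by linarith
      _ = Real.exp (-η * a) / (2 * η) := by ring
  have hsum : Real.exp (-η * a) / (2 * η) + Real.exp (-η * a) / (2 * η)
      = Real.exp (-η * a) * (1 / η) := by
    field_simp
    ring
  calc ‖-Complex.I * (η : ℂ) ^ 2 / ((ω : ℂ) * ((η : ℂ) ^ 2 + (ω : ℂ) ^ 2))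
          - 1 / 2 * (Complex.exp (-q * a) / q) + 1 / 2 * (Complex.exp (-p * a) / p)‖
      ≤ ‖-Complex.I * (η : ℂ) ^ 2 / ((ω : ℂ) * ((η : ℂ) ^ 2 + (ω : ℂ) ^ 2))
          - 1 / 2 * (Complex.exp (-q * a) / q)‖ + ‖(1 / 2 : ℂ) * (Complex.exp (-p * a) / p)‖ :=
        norm_add_le _ _
    _ ≤ (‖-Complex.I * (η : ℂ) ^ 2 / ((ω : ℂ) * ((η : ℂ) ^ 2 + (ω : ℂ) ^ 2))‖
          + ‖(1 / 2 : ℂ) * (Complex.exp (-q * a) / q)‖) + ‖(1 / 2 : ℂ) * (Complex.exp (-p * a) / p)‖ := by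
        gcongr
        exact norm_sub_le _ _
    _ ≤ (η ^ 2 / Δ ^ 3 + Real.exp (-η * a) / (2 * η)) + Real.exp (-η * a) / (2 * η) :=
        add_le_add (add_le_add habs1 habs2) habs3
    _ = η ^ 2 / Δ ^ 3 + Real.exp (-η * a) * (1 / η) := by rw [add_assoc, hsum]
    _ ≤ η ^ 2 / Δ ^ 3 + Real.exp (-η * a) * (1 / Δ + 1 / η) := by
        have h1 : (0:ℝ) < 1 / Δ := by positivity
        have h2 : Real.exp (-η * a) * (1 / η) ≤ Real.exp (-η * a) * (1 / Δ + 1 / η) :=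
          mul_le_mul_of_nonneg_left (by linarith) (Real.exp_nonneg _)
        linarith
set_option synthInstance.maxHeartbeats 1000000 in
set_option maxHeartbeats 1000000 in
lemma F_intervalIntegrable {d : ℕ}
    (H B : EuclideanSpace ℂ (Fin d) →L[ℂ] EuclideanSpace ℂ (Fin d))
    (η a : ℝ) (hη : 0 < η) :
    IntervalIntegrable (fun τ : ℝ =>
      ((Real.exp (-η * |τ|) * Real.sign τ : ℝ) : ℂ) •
        (NormedSpace.exp ((-(τ : ℂ) * Complex.I) • H) * B *
          NormedSpace.exp (((τ : ℂ) * Complex.I) • H)))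
      MeasureTheory.volume (-a) a := by
  set C : ℝ → (EuclideanSpace ℂ (Fin d) →L[ℂ] EuclideanSpace ℂ (Fin d)) := fun τ =>
    NormedSpace.exp ((-(τ : ℂ) * Complex.I) • H) * B *
      NormedSpace.exp (((τ : ℂ) * Complex.I) • H) with hC_def
  have h1 : Continuous fun τ : ℝ => ((-(τ : ℂ) * Complex.I) • H) :=
    (Complex.continuous_ofReal.neg.mul continuous_const).smul continuous_const
  have h2 : Continuous fun τ : ℝ => (((τ : ℂ) * Complex.I) • H) :=
    (Complex.continuous_ofReal.mul continuous_const).smul continuous_const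
  have hexp : Continuous (NormedSpace.exp :
      (EuclideanSpace ℂ (Fin d) →L[ℂ] EuclideanSpace ℂ (Fin d)) →
        (EuclideanSpace ℂ (Fin d) →L[ℂ] EuclideanSpace ℂ (Fin d))) := by
    rw [← continuousOn_univ, ← Metric.eball_top_eq_univ 0,
      ← NormedSpace.expSeries_radius_eq_top ℂ
        (EuclideanSpace ℂ (Fin d) →L[ℂ] EuclideanSpace ℂ (Fin d))]
    exact NormedSpace.continuousOn_exp
  have hC : Continuous C :=
    ((hexp.comp h1).mul continuous_const).mul
      (hexp.comp h2)
  have hg : Measurable (fun τ : ℝ => ((Real.exp (-η * |τ|) * Real.sign τ : ℝ) : ℂ)) :=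
    Complex.measurable_ofReal.comp
      ((Real.continuous_exp.measurable.comp (by fun_prop)).mul sign_measurable')
  obtain ⟨M, hM⟩ := (isCompact_uIcc (a := -a) (b := a)).exists_bound_of_continuousOn
    hC.continuousOn
  rw [intervalIntegrable_iff]
  apply MeasureTheory.Measure.integrableOn_of_bounded (M := 1 * M)
  · exact (measure_Ioc_lt_top).ne
  · exact ((hg.stronglyMeasurable).smul hC.stronglyMeasurable).aestronglyMeasurable
  · filter_upwards [MeasureTheory.ae_restrict_mem measurableSet_uIoc] with τ hτ
    have hτ' : τ ∈ Set.uIcc (-a) a := Set.uIoc_subset_uIcc hτ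
    refine le_trans (ContinuousLinearMap.opNorm_smul_le _ _) ?_
    exact mul_le_mul (sgn_exp_bound η hη τ) (hM τ hτ') (norm_nonneg _) zero_le_one
set_option maxHeartbeats 1000000 in
/-- Vector-norm error bound for the regularised truncated gauge potential acting
on the eigenstate `|n⟩`: `‖(A − A_{η,a})|n⟩‖ ≤ ‖B‖ (η²/Δ³ + e^{−ηa}(1/Δ + 1/η))`. -/
theorem AGP_error_on_eigenstate {d : ℕ}
    (H B A : EuclideanSpace ℂ (Fin d) →L[ℂ] EuclideanSpace ℂ (Fin d))
    (hH : IsSelfAdjoint H) (hB : IsSelfAdjoint B)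
    (e : OrthonormalBasis (Fin d) ℂ (EuclideanSpace ℂ (Fin d)))
    (Ev : Fin d → ℝ) (heig : ∀ k, H (e k) = (Ev k : ℂ) • e k)
    (n : Fin d) (Δ : ℝ) (hΔ : 0 < Δ)
    (hgap : ∀ m, m ≠ n → Δ ≤ |Ev m - Ev n|)
    (η a : ℝ) (hη : 0 < η) (ha : 0 < a)
    (hAoff : ∀ m, m ≠ n →
      ⟪e m, A (e n)⟫_ℂ = ⟪e m, B (e n)⟫_ℂ / (Complex.I * ((Ev m : ℂ) - (Ev n : ℂ))))
    (hAdiag : ⟪e n, A (e n)⟫_ℂ = 0) :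
    ‖(A - (1 / 2 : ℂ) • ∫ τ in (-a)..a,
          ((Real.exp (-η * |τ|) * Real.sign τ : ℝ) : ℂ) •
            (NormedSpace.exp ((-(τ : ℂ) * Complex.I) • H) * B *
              NormedSpace.exp (((τ : ℂ) * Complex.I) • H))) (e n)‖
      ≤ ‖B‖ * (η ^ 2 / Δ ^ 3 + Real.exp (-η * a) * (1 / Δ + 1 / η)) := by
  set F : ℝ → (EuclideanSpace ℂ (Fin d) →L[ℂ] EuclideanSpace ℂ (Fin d)) := fun τ =>
    ((Real.exp (-η * |τ|) * Real.sign τ : ℝ) : ℂ) •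
      (NormedSpace.exp ((-(τ : ℂ) * Complex.I) • H) * B *
        NormedSpace.exp (((τ : ℂ) * Complex.I) • H)) with hF_def
  set v : EuclideanSpace ℂ (Fin d) :=
    (A - (1 / 2 : ℂ) • ∫ τ in (-a)..a, F τ) (e n) with hv_def
  have hFi := F_intervalIntegrable H B η a hη
  have hmelF : ∀ (m : Fin d) (τ : ℝ), ⟪e m, F τ (e n)⟫_ℂ
      = (((Real.exp (-η * |τ|) * Real.sign τ : ℝ) : ℂ) *
          Complex.exp ((-((Ev m - Ev n : ℝ) : ℂ) * Complex.I) * (τ : ℂ))) * ⟪e m, B (e n)⟫_ℂ := by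
    intro m τ
    rw [hF_def]
    simp only
    rw [ContinuousLinearMap.smul_apply, inner_smul_right,
      mel H B hH e Ev heig m n τ, ← mul_assoc]
  have hinteg : ∀ m : Fin d, ⟪e m, (∫ τ in (-a)..a, F τ) (e n)⟫_ℂ
      = ((Complex.exp (-((η : ℂ) - (Ev m - Ev n : ℝ) * Complex.I) * a) - 1) /
            ((η : ℂ) - (Ev m - Ev n : ℝ) * Complex.I)
          + (1 - Complex.exp (-((η : ℂ) + (Ev m - Ev n : ℝ) * Complex.I) * a)) /
            ((η : ℂ) + (Ev m - Ev n : ℝ) * Complex.I)) * ⟪e m, B (e n)⟫_ℂ := by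
    intro m
    have hcomm := ((innerSL ℂ (e m)).comp
        (ContinuousLinearMap.apply ℂ (EuclideanSpace ℂ (Fin d)) (e n))).intervalIntegral_comp_comm
        hFi
    calc ⟪e m, (∫ τ in (-a)..a, F τ) (e n)⟫_ℂ
        = ∫ τ in (-a)..a, ((innerSL ℂ (e m)).comp
            (ContinuousLinearMap.apply ℂ (EuclideanSpace ℂ (Fin d)) (e n))) (F τ) := hcomm.symm
      _ = ∫ τ in (-a)..a, (((Real.exp (-η * |τ|) * Real.sign τ : ℝ) : ℂ) *
            Complex.exp ((-((Ev m - Ev n : ℝ) : ℂ) * Complex.I) * (τ : ℂ))) * ⟪e m, B (e n)⟫_ℂ := by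
          apply intervalIntegral.integral_congr
          intro τ _
          exact hmelF m τ
      _ = (∫ τ in (-a)..a, ((Real.exp (-η * |τ|) * Real.sign τ : ℝ) : ℂ) *
            Complex.exp ((-((Ev m - Ev n : ℝ) : ℂ) * Complex.I) * (τ : ℂ))) * ⟪e m, B (e n)⟫_ℂ :=
          intervalIntegral.integral_mul_const _ _
      _ = _ := by rw [Kval_eq η a (Ev m - Ev n) hη ha]
  have helem : ∀ m : Fin d, m ≠ n → ⟪e m, v⟫_ℂ
      = ⟪e m, B (e n)⟫_ℂ * ((Complex.I * ((Ev m - Ev n : ℝ) : ℂ))⁻¹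
          - (1 / 2 : ℂ) * ((Complex.exp (-((η : ℂ) - (Ev m - Ev n : ℝ) * Complex.I) * a) - 1) /
              ((η : ℂ) - (Ev m - Ev n : ℝ) * Complex.I)
            + (1 - Complex.exp (-((η : ℂ) + (Ev m - Ev n : ℝ) * Complex.I) * a)) /
              ((η : ℂ) + (Ev m - Ev n : ℝ) * Complex.I))) := by
    intro m hm
    rw [hv_def, ContinuousLinearMap.sub_apply, inner_sub_right, ContinuousLinearMap.smul_apply,
      inner_smul_right, hinteg m, hAoff m hm]
    have hcast : ((Ev m : ℂ) - (Ev n : ℂ)) = ((Ev m - Ev n : ℝ) : ℂ) := by push_cast; ring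
    rw [hcast]
    ring
  have helemn : ⟪e n, v⟫_ℂ = 0 := by
    rw [hv_def, ContinuousLinearMap.sub_apply, inner_sub_right, ContinuousLinearMap.smul_apply,
      inner_smul_right, hinteg n, hAdiag, sub_self]
    push_cast [Complex.ofReal_zero]
    ring
  have hkey : ∀ m : Fin d, ‖⟪e m, v⟫_ℂ‖
      ≤ ‖⟪e m, B (e n)⟫_ℂ‖ * (η ^ 2 / Δ ^ 3 + Real.exp (-η * a) * (1 / Δ + 1 / η)) := by
    intro m
    by_cases hm : m = n
    · subst hm
      rw [helemn, norm_zero]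
      positivity
    · rw [helem m hm, norm_mul]
      exact mul_le_mul_of_nonneg_left
        (Kbound η a Δ (Ev m - Ev n) hη ha hΔ (hgap m hm)) (norm_nonneg _)
  have hnv : ‖v‖ ^ 2 = ∑ m : Fin d, ‖⟪e m, v⟫_ℂ‖ ^ 2 := by
    rw [← e.repr.norm_map v, EuclideanSpace.norm_eq, Real.sq_sqrt (by positivity)]
    exact Finset.sum_congr rfl fun i _ => by rw [OrthonormalBasis.repr_apply_apply]
  have hnB : ‖B (e n)‖ ^ 2 = ∑ m : Fin d, ‖⟪e m, B (e n)⟫_ℂ‖ ^ 2 := by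
    rw [← e.repr.norm_map (B (e n)), EuclideanSpace.norm_eq, Real.sq_sqrt (by positivity)]
    exact Finset.sum_congr rfl fun i _ => by rw [OrthonormalBasis.repr_apply_apply]
  have hBen : ‖B (e n)‖ ≤ ‖B‖ := by
    calc ‖B (e n)‖ ≤ ‖B‖ * ‖e n‖ := B.le_opNorm _
      _ = ‖B‖ := by rw [e.orthonormal.1 n, mul_one]
  have hsq : ‖v‖ ^ 2 ≤ (‖B‖ * (η ^ 2 / Δ ^ 3 + Real.exp (-η * a) * (1 / Δ + 1 / η))) ^ 2 := by
    rw [hnv, mul_pow]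
    calc ∑ m : Fin d, ‖⟪e m, v⟫_ℂ‖ ^ 2
        ≤ ∑ m : Fin d, ‖⟪e m, B (e n)⟫_ℂ‖ ^ 2 *
            (η ^ 2 / Δ ^ 3 + Real.exp (-η * a) * (1 / Δ + 1 / η)) ^ 2 := by
          apply Finset.sum_le_sum
          intro m _
          calc ‖⟪e m, v⟫_ℂ‖ ^ 2
              ≤ (‖⟪e m, B (e n)⟫_ℂ‖ * (η ^ 2 / Δ ^ 3 + Real.exp (-η * a) * (1 / Δ + 1 / η))) ^ 2 :=
                pow_le_pow_left₀ (norm_nonneg _) (hkey m) 2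
            _ = ‖⟪e m, B (e n)⟫_ℂ‖ ^ 2 *
                (η ^ 2 / Δ ^ 3 + Real.exp (-η * a) * (1 / Δ + 1 / η)) ^ 2 := by ring
      _ = (∑ m : Fin d, ‖⟪e m, B (e n)⟫_ℂ‖ ^ 2) *
            (η ^ 2 / Δ ^ 3 + Real.exp (-η * a) * (1 / Δ + 1 / η)) ^ 2 :=
          (Finset.sum_mul _ _ _).symm
      _ ≤ ‖B‖ ^ 2 * (η ^ 2 / Δ ^ 3 + Real.exp (-η * a) * (1 / Δ + 1 / η)) ^ 2 := by
          apply mul_le_mul_of_nonneg_right _ (by positivity)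
          rw [← hnB]
          exact pow_le_pow_left₀ (norm_nonneg _) hBen 2
  calc ‖v‖ = Real.sqrt (‖v‖ ^ 2) := (Real.sqrt_sq (norm_nonneg _)).symm
    _ ≤ Real.sqrt ((‖B‖ * (η ^ 2 / Δ ^ 3 + Real.exp (-η * a) * (1 / Δ + 1 / η))) ^ 2) :=
        Real.sqrt_le_sqrt hsq
    _ = ‖B‖ * (η ^ 2 / Δ ^ 3 + Real.exp (-η * a) * (1 / Δ + 1 / η)) := Real.sqrt_sq (by positivity)
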